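/- The encoding map E preserves snapshots: for every annotation history f and every time point T, τ_T(E(f)) = f(T). -/
import Mathlib


open scoped Classical

namespace TemporalK

variable {K : Type*}

/-- An interval over the time domain `{0, ..., N-1}`: a pair `(b, e)` with `b < e ≤ N`. -/
abbrev TInterval (N : ℕ) := {I : Fin (N + 1) × Fin (N + 1) // I.1 < I.2}

/-- A temporal `K`-element: a function assigning to each interval an element of `K`. -/
abbrev TempEl (N : ℕ) (K : Type*) := TInterval N → K

/-- The interval `I = (b, e)` contains the time point `T` iff `b ≤ T < e`. -/
def Contains {N : ℕ} (I : TInterval N) (T : ℕ) : Prop :=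
  (I.val.1 : ℕ) ≤ T ∧ T < (I.val.2 : ℕ)

/-- The timeslice of `𝒯` at time point `T`: the sum of `𝒯 I` over all intervals `I`
containing `T`. -/
noncomputable def slice {N : ℕ} [CommSemiring K] (𝒯 : TempEl N K) (T : ℕ) : K :=
  ∑ I ∈ Finset.univ.filter (fun I : TInterval N => Contains I T), 𝒯 I

/-- `T` is an (annotation) changepoint of `𝒯` iff `T = 0` or the timeslices at `T - 1`
and `T` differ. -/
def Changepoint {N : ℕ} [CommSemiring K] (𝒯 : TempEl N K) (T : ℕ) : Prop :=
  T = 0 ∨ slice 𝒯 (T - 1) ≠ slice 𝒯 T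

/-- `I = (b, e)` is a changepoint interval of `𝒯` iff `b` is a changepoint, `e` is a
changepoint or equals `N`, and no time point strictly between `b` and `e` is a changepoint. -/
def CPInterval {N : ℕ} [CommSemiring K] (𝒯 : TempEl N K) (I : TInterval N) : Prop :=
  Changepoint 𝒯 (I.val.1 : ℕ) ∧
    (Changepoint 𝒯 (I.val.2 : ℕ) ∨ (I.val.2 : ℕ) = N) ∧
    ∀ T : ℕ, (I.val.1 : ℕ) < T → T < (I.val.2 : ℕ) → ¬ Changepoint 𝒯 T

/-- `K`-coalescing: maps changepoint intervals `(b, e)` to the timeslice at `b` and all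
other intervals to `0`. -/
noncomputable def coal {N : ℕ} [CommSemiring K] (𝒯 : TempEl N K) : TempEl N K :=
  fun I => if CPInterval 𝒯 I then slice 𝒯 (I.val.1 : ℕ) else 0

/-- Snapshot equivalence: equal timeslices at every time point. -/
def SnapEq {N : ℕ} [CommSemiring K] (k k' : TempEl N K) : Prop :=
  ∀ T : ℕ, T < N → slice k T = slice k' T

/-- A temporal `K`-element is coalesced iff it is the `K`-coalescing of some
temporal `K`-element. -/
def Coalesced {N : ℕ} [CommSemiring K] (k : TempEl N K) : Prop :=
  ∃ 𝒯 : TempEl N K, k = coal 𝒯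

/-- Pointwise addition of temporal `K`-elements. -/
def padd {N : ℕ} [CommSemiring K] (k k' : TempEl N K) : TempEl N K :=
  fun I => k I + k' I

/-- Pointwise multiplication of temporal `K`-elements:
`(k ·_P k')(I) = Σ k(I')·k'(I'')` over all pairs `(I', I'')` whose intersection is
nonempty and equals `I`. -/
noncomputable def pmul {N : ℕ} [CommSemiring K] (k k' : TempEl N K) : TempEl N K :=
  fun I =>
    ∑ p ∈ Finset.univ.filter (fun p : TInterval N × TInterval N =>
        max (p.1.val.1 : ℕ) (p.2.val.1 : ℕ) < min (p.1.val.2 : ℕ) (p.2.val.2 : ℕ) ∧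
        (I.val.1 : ℕ) = max (p.1.val.1 : ℕ) (p.2.val.1 : ℕ) ∧
        (I.val.2 : ℕ) = min (p.1.val.2 : ℕ) (p.2.val.2 : ℕ)),
      k p.1 * k' p.2

/-- Addition of the period semiring: coalesced pointwise addition. -/
noncomputable def tadd {N : ℕ} [CommSemiring K] (k k' : TempEl N K) : TempEl N K :=
  coal (padd k k')

/-- Multiplication of the period semiring: coalesced pointwise multiplication. -/
noncomputable def tmul {N : ℕ} [CommSemiring K] (k k' : TempEl N K) : TempEl N K :=
  coal (pmul k k')

/-- The zero of the period semiring: maps every interval to `0`. -/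
def zeroT (N : ℕ) (K : Type*) [CommSemiring K] : TempEl N K := fun _ => 0

/-- The one of the period semiring: maps the interval `(0, N)` to `1` and every other
interval to `0`. -/
def oneT (N : ℕ) (K : Type*) [CommSemiring K] : TempEl N K :=
  fun I => if (I.val.1 : ℕ) = 0 ∧ (I.val.2 : ℕ) = N then 1 else 0

/-- Encoding of an annotation history `f : time points → K` as a coalesced temporal
`K`-element: coalesce the element assigning `f T` to each singleton interval `(T, T+1)`. -/
noncomputable def enc {N : ℕ} [CommSemiring K] (f : Fin N → K) : TempEl N K :=
  coal (fun I =>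
    if h : (I.val.2 : ℕ) = (I.val.1 : ℕ) + 1 then
      f ⟨(I.val.1 : ℕ), by have := I.val.2.isLt; omega⟩
    else 0)

/-- The natural preorder of the semiring `K`. -/
def nle [CommSemiring K] (a b : K) : Prop := ∃ c, a + c = b

/-- The natural preorder of the period semiring (on coalesced temporal `K`-elements). -/
def tle {N : ℕ} [CommSemiring K] (k k' : TempEl N K) : Prop :=
  ∃ k'' : TempEl N K, Coalesced k'' ∧ tadd k k'' = k'

/-- The pointwise monus: assigns `τ_T(k) −_K τ_T(k')` to each singleton interval
`(T, T+1)` and `0` to every non-singleton interval. -/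
noncomputable def pmonus {N : ℕ} [CommSemiring K] (monus : K → K → K)
    (k k' : TempEl N K) : TempEl N K :=
  fun I =>
    if (I.val.2 : ℕ) = (I.val.1 : ℕ) + 1 then
      monus (slice k (I.val.1 : ℕ)) (slice k' (I.val.1 : ℕ))
    else 0

/-- The monus of the period semiring: coalesced pointwise monus. -/
noncomputable def tmonus {N : ℕ} [CommSemiring K] (monus : K → K → K)
    (k k' : TempEl N K) : TempEl N K :=
  coal (pmonus monus k k')

end TemporalK

open TemporalK

lemma slice_eq_of_no_cp {N : ℕ} {K : Type*} [CommSemiring K] (𝒯 : TempEl N K)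
    {b T : ℕ} (hbT : b ≤ T) (h : ∀ S, b < S → S ≤ T → ¬ Changepoint 𝒯 S) :
    slice 𝒯 b = slice 𝒯 T := by
  induction T with
  | zero =>
    have hb0 : b = 0 := by omega
    subst hb0; rfl
  | succ n ih =>
    rcases Nat.eq_or_lt_of_le hbT with h' | h'
    · rw [h']
    · have hb : b ≤ n := by omega
      have hne := h (n + 1) (by omega) le_rfl
      have hcp : slice 𝒯 n = slice 𝒯 (n + 1) := by
        by_contra hc
        exact hne (Or.inr (by simpa using hc))
      rw [← hcp]
      exact ih hb (fun S h1 h2 => h S h1 (by omega))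

lemma slice_coal {N : ℕ} {K : Type*} [CommSemiring K] (𝒯 : TempEl N K)
    {T : ℕ} (hT : T < N) : slice (coal 𝒯) T = slice 𝒯 T := by
  classical
  set b := Nat.findGreatest (Changepoint 𝒯) T with hbdef
  have hbcp : Changepoint 𝒯 b := Nat.findGreatest_spec (Nat.zero_le T) (Or.inl rfl)
  have hbT : b ≤ T := Nat.findGreatest_le T
  have hex : ∃ e, T < e ∧ (Changepoint 𝒯 e ∨ e = N) := ⟨N, hT, Or.inr rfl⟩
  set e := Nat.find hex with hedef
  obtain ⟨hTe, heP⟩ := Nat.find_spec hex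
  have heN : e ≤ N := Nat.find_min' hex ⟨hT, Or.inr rfl⟩
  set I₀ : TInterval N := ⟨(⟨b, by omega⟩, ⟨e, by omega⟩), by
    simp only [Fin.lt_def]; omega⟩ with hI₀
  have hCP : CPInterval 𝒯 I₀ := by
    refine ⟨hbcp, heP, ?_⟩
    intro S h1 h2 hcp
    by_cases hS : S ≤ T
    · exact Nat.findGreatest_is_greatest h1 hS hcp
    · exact Nat.find_min hex (show S < e from h2) ⟨by omega, Or.inl hcp⟩
  have huniq : ∀ I : TInterval N, Contains I T → CPInterval 𝒯 I → I = I₀ := by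
    intro I hcont hcpi
    obtain ⟨hcb', hce', hint⟩ := hcpi
    obtain ⟨hb'T, hTe'⟩ := hcont
    have hb'b : (I.val.1 : ℕ) ≤ b := Nat.le_findGreatest hb'T hcb'
    have hbb' : (I.val.1 : ℕ) = b := by
      by_contra hne
      exact hint b (by omega) (by omega) hbcp
    have hee' : e ≤ (I.val.2 : ℕ) := Nat.find_min' hex ⟨hTe', hce'⟩
    have he'e : (I.val.2 : ℕ) = e := by
      by_contra hne
      rcases heP with hcpe | heqN
      · exact hint e (by omega) (by omega) hcpe
      · have := I.val.2.isLt; omega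
    apply Subtype.ext
    apply Prod.ext <;> apply Fin.ext <;> simp [hI₀, hbb', he'e]
  have hmem : I₀ ∈ Finset.univ.filter (fun I : TInterval N => Contains I T) := by
    simp only [Finset.mem_filter, Finset.mem_univ, true_and]
    exact ⟨hbT, hTe⟩
  have hsum : slice (coal 𝒯) T = coal 𝒯 I₀ := by
    apply Finset.sum_eq_single_of_mem I₀ hmem
    intro I hI hne
    simp only [Finset.mem_filter, Finset.mem_univ, true_and] at hI
    rw [coal, if_neg]
    intro hcpi
    exact hne (huniq I hI hcpi)
  rw [hsum, coal, if_pos hCP]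
  have : ((I₀.val.1 : ℕ)) = b := by simp [hI₀]
  rw [this]
  exact slice_eq_of_no_cp 𝒯 hbT
    (fun S h1 h2 => fun hcp => Nat.findGreatest_is_greatest h1 h2 hcp)

theorem enc_preserves_snapshots {N : ℕ} (hN : 1 ≤ N) {K : Type*} [CommSemiring K]
    (f : Fin N → K) (T : Fin N) :
    slice (enc f) (T : ℕ) = f T := by
  classical
  have hT : (T : ℕ) < N := T.isLt
  rw [enc, slice_coal _ hT]
  set 𝒯 : TempEl N K := fun I =>
    if h : (I.val.2 : ℕ) = (I.val.1 : ℕ) + 1 then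
      f ⟨(I.val.1 : ℕ), by have := I.val.2.isLt; omega⟩
    else 0 with h𝒯
  set I₁ : TInterval N := ⟨(⟨(T : ℕ), by omega⟩, ⟨(T : ℕ) + 1, by omega⟩), by
    simp only [Fin.lt_def]; omega⟩ with hI₁
  have hmem : I₁ ∈ Finset.univ.filter (fun I : TInterval N => Contains I (T : ℕ)) := by
    simp only [Finset.mem_filter, Finset.mem_univ, true_and]
    exact ⟨le_refl _, Nat.lt_succ_self _⟩
  have hsum : slice 𝒯 (T : ℕ) = 𝒯 I₁ := by
    apply Finset.sum_eq_single_of_mem I₁ hmem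
    intro I hI hne
    simp only [Finset.mem_filter, Finset.mem_univ, true_and] at hI
    obtain ⟨h1, h2⟩ := hI
    by_cases hc : (I.val.2 : ℕ) = (I.val.1 : ℕ) + 1
    · exfalso
      apply hne
      have hb : (I.val.1 : ℕ) = (T : ℕ) := by omega
      have he : (I.val.2 : ℕ) = (T : ℕ) + 1 := by omega
      apply Subtype.ext
      apply Prod.ext <;> apply Fin.ext <;> simp [hI₁, hb, he]
    · exact dif_neg hc
  rw [hsum]
  have : 𝒯 I₁ = f T := by
    simp [h𝒯, hI₁]
  exact this
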